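/- Quantum degenerate Garnier system G(1,2,2), commutativity of the two Hamiltonian flows (Theorem 4.1, case 4): define K1 = (t1−t2)q1^2p1^2 + 2t1·q1q2p1p2 − t2·q1^2p1p2 − t1·q2^2p1p2 + (t2−t1)q1^2p1 + ((α1+α2+α3)t1 − (α1+α2)t2)q1p1 − α1·t2·q1p2 − α3·t1·q2p1 + α1·t1·q2p2 − α1(t1−t2)q1 + t1(t1−t2)p1, and K2 = (t1−t2)q2^2p2^2 − 2t2·q1q2p1p2 + t2·q1^2p1p2 + t1·q2^2p1p2 + (t2−t1)q2^2p2 − α3·t2·q1p1 + α1·t2·q1p2 + α3·t1·q2p1 + ((α2+α3)t1 − (α1+α2+α3)t2)q2p2 − α3(t1−t2)q2 + t2(t1−t2)p2. Then K1·K2 = K2·K1; i.e. the quantum G(1,2,2) Hamiltonians, which are K1 and K2 divided by the central element (2h+α1+α2+α3+2α4) times a central polynomial in t1, t2, commute. -/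
import Mathlib


set_option maxHeartbeats 4000000 in
/-- Quantum degenerate Garnier system G(1,2,2): commutativity of the two Hamiltonian flows. -/
theorem quantum_garnier_G122_commute
    {R : Type*} [Ring R]
    (h α1 α2 α3 α4 t1 t2 : R)
    (hh : ∀ r : R, h * r = r * h)
    (hA1 : ∀ r : R, α1 * r = r * α1)
    (hA2 : ∀ r : R, α2 * r = r * α2)
    (hA3 : ∀ r : R, α3 * r = r * α3)
    (hA4 : ∀ r : R, α4 * r = r * α4)
    (ht1 : ∀ r : R, t1 * r = r * t1)
    (ht2 : ∀ r : R, t2 * r = r * t2)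
    (q1 p1 q2 p2 : R)
    (hq1p1 : q1 * p1 - p1 * q1 = h)
    (hq2p2 : q2 * p2 - p2 * q2 = h)
    (hq1q2 : q1 * q2 - q2 * q1 = 0)
    (hp1p2 : p1 * p2 - p2 * p1 = 0)
    (hq1p2 : q1 * p2 - p2 * q1 = 0)
    (hq2p1 : q2 * p1 - p1 * q2 = 0)
    (K1 K2 : R)
    (hK1 : K1 =
      (t1 - t2) * q1^2 * p1^2 + 2 * t1 * q1 * q2 * p1 * p2
      - t2 * q1^2 * p1 * p2 - t1 * q2^2 * p1 * p2
      + (t2 - t1) * q1^2 * p1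
      + ((α1 + α2 + α3) * t1 - (α1 + α2) * t2) * q1 * p1
      - α1 * t2 * q1 * p2
      - α3 * t1 * q2 * p1
      + α1 * t1 * q2 * p2
      - α1 * (t1 - t2) * q1
      + t1 * (t1 - t2) * p1)
    (hK2 : K2 =
      (t1 - t2) * q2^2 * p2^2 - 2 * t2 * q1 * q2 * p1 * p2
      + t2 * q1^2 * p1 * p2 + t1 * q2^2 * p1 * p2
      + (t2 - t1) * q2^2 * p2
      - α3 * t2 * q1 * p1
      + α1 * t2 * q1 * p2
      + α3 * t1 * q2 * p1
      + ((α2 + α3) * t1 - (α1 + α2 + α3) * t2) * q2 * p2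
      - α3 * (t1 - t2) * q2
      + t2 * (t1 - t2) * p2) :
    K1 * K2 = K2 * K1 := by
  subst hK1 hK2
  have w_A1_h : α1 * h = h * α1 := (hh α1).symm
  have w_A1_h' : ∀ z : R, α1 * (h * z) = h * (α1 * z) := fun z => by rw [← mul_assoc, w_A1_h, mul_assoc]
  have w_A2_h : α2 * h = h * α2 := (hh α2).symm
  have w_A2_h' : ∀ z : R, α2 * (h * z) = h * (α2 * z) := fun z => by rw [← mul_assoc, w_A2_h, mul_assoc]
  have w_A3_h : α3 * h = h * α3 := (hh α3).symm
  have w_A3_h' : ∀ z : R, α3 * (h * z) = h * (α3 * z) := fun z => by rw [← mul_assoc, w_A3_h, mul_assoc]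
  have w_t1_h : t1 * h = h * t1 := (hh t1).symm
  have w_t1_h' : ∀ z : R, t1 * (h * z) = h * (t1 * z) := fun z => by rw [← mul_assoc, w_t1_h, mul_assoc]
  have w_t2_h : t2 * h = h * t2 := (hh t2).symm
  have w_t2_h' : ∀ z : R, t2 * (h * z) = h * (t2 * z) := fun z => by rw [← mul_assoc, w_t2_h, mul_assoc]
  have w_q1_h : q1 * h = h * q1 := (hh q1).symm
  have w_q1_h' : ∀ z : R, q1 * (h * z) = h * (q1 * z) := fun z => by rw [← mul_assoc, w_q1_h, mul_assoc]
  have w_q2_h : q2 * h = h * q2 := (hh q2).symm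
  have w_q2_h' : ∀ z : R, q2 * (h * z) = h * (q2 * z) := fun z => by rw [← mul_assoc, w_q2_h, mul_assoc]
  have w_p1_h : p1 * h = h * p1 := (hh p1).symm
  have w_p1_h' : ∀ z : R, p1 * (h * z) = h * (p1 * z) := fun z => by rw [← mul_assoc, w_p1_h, mul_assoc]
  have w_p2_h : p2 * h = h * p2 := (hh p2).symm
  have w_p2_h' : ∀ z : R, p2 * (h * z) = h * (p2 * z) := fun z => by rw [← mul_assoc, w_p2_h, mul_assoc]
  have w_A2_A1 : α2 * α1 = α1 * α2 := (hA1 α2).symm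
  have w_A2_A1' : ∀ z : R, α2 * (α1 * z) = α1 * (α2 * z) := fun z => by rw [← mul_assoc, w_A2_A1, mul_assoc]
  have w_A3_A1 : α3 * α1 = α1 * α3 := (hA1 α3).symm
  have w_A3_A1' : ∀ z : R, α3 * (α1 * z) = α1 * (α3 * z) := fun z => by rw [← mul_assoc, w_A3_A1, mul_assoc]
  have w_t1_A1 : t1 * α1 = α1 * t1 := (hA1 t1).symm
  have w_t1_A1' : ∀ z : R, t1 * (α1 * z) = α1 * (t1 * z) := fun z => by rw [← mul_assoc, w_t1_A1, mul_assoc]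
  have w_t2_A1 : t2 * α1 = α1 * t2 := (hA1 t2).symm
  have w_t2_A1' : ∀ z : R, t2 * (α1 * z) = α1 * (t2 * z) := fun z => by rw [← mul_assoc, w_t2_A1, mul_assoc]
  have w_q1_A1 : q1 * α1 = α1 * q1 := (hA1 q1).symm
  have w_q1_A1' : ∀ z : R, q1 * (α1 * z) = α1 * (q1 * z) := fun z => by rw [← mul_assoc, w_q1_A1, mul_assoc]
  have w_q2_A1 : q2 * α1 = α1 * q2 := (hA1 q2).symm
  have w_q2_A1' : ∀ z : R, q2 * (α1 * z) = α1 * (q2 * z) := fun z => by rw [← mul_assoc, w_q2_A1, mul_assoc]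
  have w_p1_A1 : p1 * α1 = α1 * p1 := (hA1 p1).symm
  have w_p1_A1' : ∀ z : R, p1 * (α1 * z) = α1 * (p1 * z) := fun z => by rw [← mul_assoc, w_p1_A1, mul_assoc]
  have w_p2_A1 : p2 * α1 = α1 * p2 := (hA1 p2).symm
  have w_p2_A1' : ∀ z : R, p2 * (α1 * z) = α1 * (p2 * z) := fun z => by rw [← mul_assoc, w_p2_A1, mul_assoc]
  have w_A3_A2 : α3 * α2 = α2 * α3 := (hA2 α3).symm
  have w_A3_A2' : ∀ z : R, α3 * (α2 * z) = α2 * (α3 * z) := fun z => by rw [← mul_assoc, w_A3_A2, mul_assoc]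
  have w_t1_A2 : t1 * α2 = α2 * t1 := (hA2 t1).symm
  have w_t1_A2' : ∀ z : R, t1 * (α2 * z) = α2 * (t1 * z) := fun z => by rw [← mul_assoc, w_t1_A2, mul_assoc]
  have w_t2_A2 : t2 * α2 = α2 * t2 := (hA2 t2).symm
  have w_t2_A2' : ∀ z : R, t2 * (α2 * z) = α2 * (t2 * z) := fun z => by rw [← mul_assoc, w_t2_A2, mul_assoc]
  have w_q1_A2 : q1 * α2 = α2 * q1 := (hA2 q1).symm
  have w_q1_A2' : ∀ z : R, q1 * (α2 * z) = α2 * (q1 * z) := fun z => by rw [← mul_assoc, w_q1_A2, mul_assoc]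
  have w_q2_A2 : q2 * α2 = α2 * q2 := (hA2 q2).symm
  have w_q2_A2' : ∀ z : R, q2 * (α2 * z) = α2 * (q2 * z) := fun z => by rw [← mul_assoc, w_q2_A2, mul_assoc]
  have w_p1_A2 : p1 * α2 = α2 * p1 := (hA2 p1).symm
  have w_p1_A2' : ∀ z : R, p1 * (α2 * z) = α2 * (p1 * z) := fun z => by rw [← mul_assoc, w_p1_A2, mul_assoc]
  have w_p2_A2 : p2 * α2 = α2 * p2 := (hA2 p2).symm
  have w_p2_A2' : ∀ z : R, p2 * (α2 * z) = α2 * (p2 * z) := fun z => by rw [← mul_assoc, w_p2_A2, mul_assoc]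
  have w_t1_A3 : t1 * α3 = α3 * t1 := (hA3 t1).symm
  have w_t1_A3' : ∀ z : R, t1 * (α3 * z) = α3 * (t1 * z) := fun z => by rw [← mul_assoc, w_t1_A3, mul_assoc]
  have w_t2_A3 : t2 * α3 = α3 * t2 := (hA3 t2).symm
  have w_t2_A3' : ∀ z : R, t2 * (α3 * z) = α3 * (t2 * z) := fun z => by rw [← mul_assoc, w_t2_A3, mul_assoc]
  have w_q1_A3 : q1 * α3 = α3 * q1 := (hA3 q1).symm
  have w_q1_A3' : ∀ z : R, q1 * (α3 * z) = α3 * (q1 * z) := fun z => by rw [← mul_assoc, w_q1_A3, mul_assoc]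
  have w_q2_A3 : q2 * α3 = α3 * q2 := (hA3 q2).symm
  have w_q2_A3' : ∀ z : R, q2 * (α3 * z) = α3 * (q2 * z) := fun z => by rw [← mul_assoc, w_q2_A3, mul_assoc]
  have w_p1_A3 : p1 * α3 = α3 * p1 := (hA3 p1).symm
  have w_p1_A3' : ∀ z : R, p1 * (α3 * z) = α3 * (p1 * z) := fun z => by rw [← mul_assoc, w_p1_A3, mul_assoc]
  have w_p2_A3 : p2 * α3 = α3 * p2 := (hA3 p2).symm
  have w_p2_A3' : ∀ z : R, p2 * (α3 * z) = α3 * (p2 * z) := fun z => by rw [← mul_assoc, w_p2_A3, mul_assoc]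
  have w_t2_t1 : t2 * t1 = t1 * t2 := (ht1 t2).symm
  have w_t2_t1' : ∀ z : R, t2 * (t1 * z) = t1 * (t2 * z) := fun z => by rw [← mul_assoc, w_t2_t1, mul_assoc]
  have w_q1_t1 : q1 * t1 = t1 * q1 := (ht1 q1).symm
  have w_q1_t1' : ∀ z : R, q1 * (t1 * z) = t1 * (q1 * z) := fun z => by rw [← mul_assoc, w_q1_t1, mul_assoc]
  have w_q2_t1 : q2 * t1 = t1 * q2 := (ht1 q2).symm
  have w_q2_t1' : ∀ z : R, q2 * (t1 * z) = t1 * (q2 * z) := fun z => by rw [← mul_assoc, w_q2_t1, mul_assoc]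
  have w_p1_t1 : p1 * t1 = t1 * p1 := (ht1 p1).symm
  have w_p1_t1' : ∀ z : R, p1 * (t1 * z) = t1 * (p1 * z) := fun z => by rw [← mul_assoc, w_p1_t1, mul_assoc]
  have w_p2_t1 : p2 * t1 = t1 * p2 := (ht1 p2).symm
  have w_p2_t1' : ∀ z : R, p2 * (t1 * z) = t1 * (p2 * z) := fun z => by rw [← mul_assoc, w_p2_t1, mul_assoc]
  have w_q1_t2 : q1 * t2 = t2 * q1 := (ht2 q1).symm
  have w_q1_t2' : ∀ z : R, q1 * (t2 * z) = t2 * (q1 * z) := fun z => by rw [← mul_assoc, w_q1_t2, mul_assoc]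
  have w_q2_t2 : q2 * t2 = t2 * q2 := (ht2 q2).symm
  have w_q2_t2' : ∀ z : R, q2 * (t2 * z) = t2 * (q2 * z) := fun z => by rw [← mul_assoc, w_q2_t2, mul_assoc]
  have w_p1_t2 : p1 * t2 = t2 * p1 := (ht2 p1).symm
  have w_p1_t2' : ∀ z : R, p1 * (t2 * z) = t2 * (p1 * z) := fun z => by rw [← mul_assoc, w_p1_t2, mul_assoc]
  have w_p2_t2 : p2 * t2 = t2 * p2 := (ht2 p2).symm
  have w_p2_t2' : ∀ z : R, p2 * (t2 * z) = t2 * (p2 * z) := fun z => by rw [← mul_assoc, w_p2_t2, mul_assoc]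
  have w_q2_q1 : q2 * q1 = q1 * q2 := (sub_eq_zero.mp hq1q2).symm
  have w_q2_q1' : ∀ z : R, q2 * (q1 * z) = q1 * (q2 * z) := fun z => by rw [← mul_assoc, w_q2_q1, mul_assoc]
  have w_p2_p1 : p2 * p1 = p1 * p2 := (sub_eq_zero.mp hp1p2).symm
  have w_p2_p1' : ∀ z : R, p2 * (p1 * z) = p1 * (p2 * z) := fun z => by rw [← mul_assoc, w_p2_p1, mul_assoc]
  have w_p2_q1 : p2 * q1 = q1 * p2 := (sub_eq_zero.mp hq1p2).symm
  have w_p2_q1' : ∀ z : R, p2 * (q1 * z) = q1 * (p2 * z) := fun z => by rw [← mul_assoc, w_p2_q1, mul_assoc]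
  have w_p1_q2 : p1 * q2 = q2 * p1 := (sub_eq_zero.mp hq2p1).symm
  have w_p1_q2' : ∀ z : R, p1 * (q2 * z) = q2 * (p1 * z) := fun z => by rw [← mul_assoc, w_p1_q2, mul_assoc]
  have w_p1_q1 : p1 * q1 = q1 * p1 - h := by rw [← hq1p1]; abel
  have w_p1_q1' : ∀ z : R, p1 * (q1 * z) = q1 * (p1 * z) - h * z := fun z => by rw [← mul_assoc, w_p1_q1, sub_mul, mul_assoc]
  have w_p2_q2 : p2 * q2 = q2 * p2 - h := by rw [← hq2p2]; abel
  have w_p2_q2' : ∀ z : R, p2 * (q2 * z) = q2 * (p2 * z) - h * z := fun z => by rw [← mul_assoc, w_p2_q2, sub_mul, mul_assoc]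
  simp only [pow_two, mul_assoc, mul_add, add_mul, mul_sub, sub_mul, two_mul,
    w_A1_h, w_A1_h', w_A2_h, w_A2_h', w_A3_h, w_A3_h', w_t1_h, w_t1_h', w_t2_h, w_t2_h', w_q1_h, w_q1_h', w_q2_h, w_q2_h', w_p1_h, w_p1_h', w_p2_h, w_p2_h', w_A2_A1, w_A2_A1', w_A3_A1, w_A3_A1', w_t1_A1, w_t1_A1', w_t2_A1, w_t2_A1', w_q1_A1, w_q1_A1', w_q2_A1, w_q2_A1', w_p1_A1, w_p1_A1', w_p2_A1, w_p2_A1', w_A3_A2, w_A3_A2', w_t1_A2, w_t1_A2', w_t2_A2, w_t2_A2', w_q1_A2, w_q1_A2', w_q2_A2, w_q2_A2', w_p1_A2, w_p1_A2', w_p2_A2, w_p2_A2', w_t1_A3, w_t1_A3', w_t2_A3, w_t2_A3', w_q1_A3, w_q1_A3', w_q2_A3, w_q2_A3', w_p1_A3, w_p1_A3', w_p2_A3, w_p2_A3', w_t2_t1, w_t2_t1', w_q1_t1, w_q1_t1', w_q2_t1, w_q2_t1', w_p1_t1, w_p1_t1', w_p2_t1, w_p2_t1', w_q1_t2, w_q1_t2',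 w_q2_t2, w_q2_t2', w_p1_t2, w_p1_t2', w_p2_t2, w_p2_t2', w_q2_q1, w_q2_q1', w_p2_p1, w_p2_p1', w_p2_q1, w_p2_q1', w_p1_q2, w_p1_q2', w_p1_q1, w_p1_q1', w_p2_q2, w_p2_q2']
  abel
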